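/- Let C be a type, comp a composition rule satisfying (C2) and (C3) with neutral element e, d a decomposition rule satisfying (D2) and (D3) with the same element e as void object, assume (CD1), and assume the size-compatibility condition (CD2): there is sz : C → ℕ with sz Γ = sz Γ₂ + sz Γ₁ whenever Γ ∈ comp Γ₂ Γ₁, with sz Γ'' + sz Γ' = sz Γ whenever (Γ'', Γ') ∈ d Γ, and with sz Γ = 0 ↔ Γ = e. Let K be a commutative ring. Then: (i) there exists a K-linear antipode S : (C →₀ K) →ₗ[K] (C →₀ K) satisfying, for every Γ, ((d Γ).map (fun p => mul (S (Finsupp.single p.1 1)) (Finsupp.single p.2 1))).sum = (if Γ = e then Finsupp.single e 1 else 0) and the symmetric identity with S applied to the second components; and (ii) the Hopf algebra is graded by size: for Γ₂ with sz Γ₂ = i and Γ₁ with sz Γ₁ = j, the product mul (Finsupp.single Γ₂ 1) (Finsupp.single Γ₁ 1) is supported on elements Γ with sz Γ = i + j, and for Γ with sz Γ = k every pair (Γ'', Γ') ∈ d Γ satisfies sz Γ'' + sz Γ' = k. (Proposition 4, Grading.) -/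

import Mathlib

/-- The induced multiplication on the free module `C →₀ K`. -/
noncomputable def mulF {C : Type*} (K : Type*) [CommRing K]
    (comp : C → C → Multiset C) : (C →₀ K) →ₗ[K] (C →₀ K) →ₗ[K] (C →₀ K) :=
  Finsupp.lift ((C →₀ K) →ₗ[K] (C →₀ K)) K C fun Γ₂ =>
    Finsupp.lift (C →₀ K) K C fun Γ₁ =>
      ((comp Γ₂ Γ₁).map fun Γ => Finsupp.single Γ (1 : K)).sum

set_option linter.unusedSectionVars false
set_option linter.unusedVariables false
set_option maxHeartbeats 1000000

noncomputable def SA {C : Type*} (K : Type*) [CommRing K] [DecidableEq C]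
    (comp : C → C → Multiset C) (e : C) (d : C → Multiset (C × C)) :
    ℕ → C → (C →₀ K)
  | 0, Γ => if Γ = e then Finsupp.single e 1 else 0
  | (n+1), Γ => if Γ = e then Finsupp.single e 1 else
      -(((d Γ).erase (Γ, e)).map fun p =>
        mulF K comp (SA K comp e d n p.1) (Finsupp.single p.2 1)).sum

noncomputable def TA {C : Type*} (K : Type*) [CommRing K] [DecidableEq C]
    (comp : C → C → Multiset C) (e : C) (d : C → Multiset (C × C)) :
    ℕ → C → (C →₀ K)
  | 0, Γ => if Γ = e then Finsupp.single e 1 else 0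
  | (n+1), Γ => if Γ = e then Finsupp.single e 1 else
      -(((d Γ).erase (e, Γ)).map fun p =>
        mulF K comp (Finsupp.single p.1 1) (TA K comp e d n p.2)).sum

section
variable {C : Type*} (K : Type*) [CommRing K] [DecidableEq C]
variable (comp : C → C → Multiset C) (e : C) (d : C → Multiset (C × C)) (sz : C → ℕ)

lemma mulF_single (a b : C) : mulF K comp (Finsupp.single a 1) (Finsupp.single b 1)
    = ((comp a b).map fun Γ => Finsupp.single Γ (1:K)).sum := by
  simp [mulF, Finsupp.lift_apply, Finsupp.sum_single_index]

lemma mulF_sum_left (s : Multiset (C →₀ K)) (y : C →₀ K) :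
    mulF K comp s.sum y = (s.map fun x => mulF K comp x y).sum := by
  induction s using Multiset.induction_on with
  | empty => simp
  | cons a s ih => simp [ih]

lemma mulF_sum_right (x : C →₀ K) (s : Multiset (C →₀ K)) :
    mulF K comp x s.sum = (s.map fun y => mulF K comp x y).sum := by
  induction s using Multiset.induction_on with
  | empty => simp
  | cons a s ih => simp [ih]

lemma mulF_e_right (hC3r : ∀ Γ : C, comp Γ e = {Γ}) (x : C →₀ K) :
    mulF K comp x (Finsupp.single e 1) = x := by
  induction x using Finsupp.induction_linear with
  | zero => simp
  | add f g hf hg => simp [map_add, LinearMap.add_apply, hf, hg]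
  | single a b =>
    have : (Finsupp.single a b : C →₀ K) = b • Finsupp.single a 1 := by
      simp [Finsupp.smul_single]
    rw [this, map_smul, LinearMap.smul_apply, mulF_single, hC3r]
    simp

lemma mulF_e_left (hC3l : ∀ Γ : C, comp e Γ = {Γ}) (x : C →₀ K) :
    mulF K comp (Finsupp.single e 1) x = x := by
  induction x using Finsupp.induction_linear with
  | zero => simp
  | add f g hf hg => simp [map_add, hf, hg]
  | single a b =>
    have : (Finsupp.single a b : C →₀ K) = b • Finsupp.single a 1 := by
      simp [Finsupp.smul_single]
    rw [this, map_smul, mulF_single, hC3l]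
    simp

lemma mulF_assoc (hC2 : ∀ Γ₃ Γ₂ Γ₁ : C,
      (comp Γ₂ Γ₁).bind (fun x => comp Γ₃ x) = (comp Γ₃ Γ₂).bind (fun x => comp x Γ₁))
    (x y z : C →₀ K) :
    mulF K comp (mulF K comp x y) z = mulF K comp x (mulF K comp y z) := by
  have key : ∀ a b c : C,
      mulF K comp (mulF K comp (Finsupp.single a 1) (Finsupp.single b 1)) (Finsupp.single c 1)
      = mulF K comp (Finsupp.single a 1)
          (mulF K comp (Finsupp.single b 1) (Finsupp.single c 1)) := by
    intro a b c
    rw [mulF_single, mulF_single, mulF_sum_left, mulF_sum_right, Multiset.map_map,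
      Multiset.map_map]
    have h1 : ((comp a b).map fun Γ => mulF K comp (Finsupp.single Γ 1) (Finsupp.single c 1)).sum
        = (((comp a b).bind fun Γ => comp Γ c).map fun Δ => Finsupp.single Δ (1:K)).sum := by
      rw [Multiset.map_bind, Multiset.sum_bind]
      congr 1
      exact Multiset.map_congr rfl fun Γ _ => by rw [mulF_single]
    have h2 : ((comp b c).map fun Γ => mulF K comp (Finsupp.single a 1) (Finsupp.single Γ 1)).sum
        = (((comp b c).bind fun Γ => comp a Γ).map fun Δ => Finsupp.single Δ (1:K)).sum := by
      rw [Multiset.map_bind, Multiset.sum_bind]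
      congr 1
      exact Multiset.map_congr rfl fun Γ _ => by rw [mulF_single]
    simp only [Function.comp]
    rw [h1, h2, ← hC2 a b c]
  induction x using Finsupp.induction_linear with
  | zero => simp
  | add f g hf hg => simp [map_add, LinearMap.add_apply, hf, hg]
  | single a ka =>
    induction y using Finsupp.induction_linear with
    | zero => simp
    | add f g hf hg => simp [map_add, LinearMap.add_apply, hf, hg]
    | single b kb =>
      induction z using Finsupp.induction_linear with
      | zero => simp
      | add f g hf hg => simp [map_add, hf, hg]
      | single c kc =>
        have ea : (Finsupp.single a ka : C →₀ K) = ka • Finsupp.single a 1 := by simp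
        have eb : (Finsupp.single b kb : C →₀ K) = kb • Finsupp.single b 1 := by simp
        have ec : (Finsupp.single c kc : C →₀ K) = kc • Finsupp.single c 1 := by simp
        rw [ea, eb, ec]
        simp only [map_smul, LinearMap.smul_apply]
        rw [key a b c]

lemma erase_mem_facts
    (hD3c : ∀ Γ : C, Γ ≠ e → (d Γ).count (Γ, e) = 1)
    (hD3d : ∀ Γ : C, Γ ≠ e → ∀ p ∈ d Γ,
      (p.1 = e → p = (e, Γ)) ∧ (p.2 = e → p = (Γ, e)))
    (hszd : ∀ Γ : C, ∀ p ∈ d Γ, sz p.1 + sz p.2 = sz Γ)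
    (hze : ∀ Γ : C, sz Γ = 0 ↔ Γ = e)
    {Γ : C} (hΓ : Γ ≠ e) {p : C × C}
    (hp : p ∈ (d Γ).erase (Γ, e)) :
    p ∈ d Γ ∧ p.2 ≠ e ∧ sz p.1 < sz Γ := by
  have hpd : p ∈ d Γ := Multiset.mem_of_mem_erase hp
  have hne : p ≠ (Γ, e) := by
    intro h; subst h
    have := Multiset.count_erase_self (Γ, e) (d Γ)
    rw [hD3c Γ hΓ] at this
    simp only [Nat.sub_self] at this
    exact Multiset.count_eq_zero.mp this (by simpa using hp)
  have h2 : p.2 ≠ e := fun h => hne ((hD3d Γ hΓ p hpd).2 h)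
  refine ⟨hpd, h2, ?_⟩
  have := hszd Γ p hpd
  have h2' : 0 < sz p.2 := Nat.pos_of_ne_zero (fun h => h2 ((hze p.2).mp h))
  omega

lemma erase_mem_facts'
    (hD3b : ∀ Γ : C, Γ ≠ e → (d Γ).count (e, Γ) = 1)
    (hD3d : ∀ Γ : C, Γ ≠ e → ∀ p ∈ d Γ,
      (p.1 = e → p = (e, Γ)) ∧ (p.2 = e → p = (Γ, e)))
    (hszd : ∀ Γ : C, ∀ p ∈ d Γ, sz p.1 + sz p.2 = sz Γ)
    (hze : ∀ Γ : C, sz Γ = 0 ↔ Γ = e)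
    {Γ : C} (hΓ : Γ ≠ e) {p : C × C}
    (hp : p ∈ (d Γ).erase (e, Γ)) :
    p ∈ d Γ ∧ p.1 ≠ e ∧ sz p.2 < sz Γ := by
  have hpd : p ∈ d Γ := Multiset.mem_of_mem_erase hp
  have hne : p ≠ (e, Γ) := by
    intro h; subst h
    have := Multiset.count_erase_self (e, Γ) (d Γ)
    rw [hD3b Γ hΓ] at this
    simp only [Nat.sub_self] at this
    exact Multiset.count_eq_zero.mp this (by simpa using hp)
  have h1 : p.1 ≠ e := fun h => hne ((hD3d Γ hΓ p hpd).1 h)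
  refine ⟨hpd, h1, ?_⟩
  have := hszd Γ p hpd
  have h1' : 0 < sz p.1 := Nat.pos_of_ne_zero (fun h => h1 ((hze p.1).mp h))
  omega

lemma SA_stable
    (hD3c : ∀ Γ : C, Γ ≠ e → (d Γ).count (Γ, e) = 1)
    (hD3d : ∀ Γ : C, Γ ≠ e → ∀ p ∈ d Γ,
      (p.1 = e → p = (e, Γ)) ∧ (p.2 = e → p = (Γ, e)))
    (hszd : ∀ Γ : C, ∀ p ∈ d Γ, sz p.1 + sz p.2 = sz Γ)
    (hze : ∀ Γ : C, sz Γ = 0 ↔ Γ = e) :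
    ∀ k : ℕ, ∀ Γ : C, sz Γ = k → ∀ n m : ℕ, k ≤ n → k ≤ m →
    SA K comp e d n Γ = SA K comp e d m Γ := by
  intro k
  induction k using Nat.strong_induction_on with
  | _ k ih =>
    intro Γ hΓ n m hn hm
    by_cases he : Γ = e
    · subst he; cases n <;> cases m <;> simp [SA]
    · have hk : 0 < k := by
        rcases Nat.eq_zero_or_pos k with h | h
        · exact absurd ((hze Γ).mp (hΓ.trans h)) he
        · exact h
      obtain ⟨n', rfl⟩ : ∃ n', n = n' + 1 := ⟨n - 1, by omega⟩
      obtain ⟨m', rfl⟩ : ∃ m', m = m' + 1 := ⟨m - 1, by omega⟩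
      simp only [SA, if_neg he]
      congr 1
      congr 1
      apply Multiset.map_congr rfl
      intro p hp
      obtain ⟨hpd, h2, hlt⟩ := erase_mem_facts e d sz hD3c hD3d hszd hze he hp
      rw [ih (sz p.1) (by omega) p.1 rfl n' m' (by omega) (by omega)]

lemma TA_stable
    (hD3b : ∀ Γ : C, Γ ≠ e → (d Γ).count (e, Γ) = 1)
    (hD3d : ∀ Γ : C, Γ ≠ e → ∀ p ∈ d Γ,
      (p.1 = e → p = (e, Γ)) ∧ (p.2 = e → p = (Γ, e)))
    (hszd : ∀ Γ : C, ∀ p ∈ d Γ, sz p.1 + sz p.2 = sz Γ)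
    (hze : ∀ Γ : C, sz Γ = 0 ↔ Γ = e) :
    ∀ k : ℕ, ∀ Γ : C, sz Γ = k → ∀ n m : ℕ, k ≤ n → k ≤ m →
    TA K comp e d n Γ = TA K comp e d m Γ := by
  intro k
  induction k using Nat.strong_induction_on with
  | _ k ih =>
    intro Γ hΓ n m hn hm
    by_cases he : Γ = e
    · subst he; cases n <;> cases m <;> simp [TA]
    · have hk : 0 < k := by
        rcases Nat.eq_zero_or_pos k with h | h
        · exact absurd ((hze Γ).mp (hΓ.trans h)) he
        · exact h
      obtain ⟨n', rfl⟩ : ∃ n', n = n' + 1 := ⟨n - 1, by omega⟩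
      obtain ⟨m', rfl⟩ : ∃ m', m = m' + 1 := ⟨m - 1, by omega⟩
      simp only [TA, if_neg he]
      congr 1
      congr 1
      apply Multiset.map_congr rfl
      intro p hp
      obtain ⟨hpd, h1, hlt⟩ := erase_mem_facts' e d sz hD3b hD3d hszd hze he hp
      rw [ih (sz p.2) (by omega) p.2 rfl n' m' (by omega) (by omega)]

noncomputable def convF (f g : C → (C →₀ K)) : C → (C →₀ K) :=
  fun Γ => ((d Γ).map fun p => mulF K comp (f p.1) (g p.2)).sum

lemma conv_assoc
    (hmulassoc : ∀ x y z : C →₀ K,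
      mulF K comp (mulF K comp x y) z = mulF K comp x (mulF K comp y z))
    (hD2 : ∀ Γ : C,
      (d Γ).bind (fun p => (d p.2).map (fun q => (p.1, q.1, q.2))) =
      (d Γ).bind (fun p => (d p.1).map (fun q => (q.1, q.2, p.2))))
    (f g h : C → (C →₀ K)) :
    convF K comp d (convF K comp d f g) h = convF K comp d f (convF K comp d g h) := by
  funext Γ
  have hL : convF K comp d (convF K comp d f g) h Γ =
      (((d Γ).bind fun p => (d p.1).map fun q => (q.1, q.2, p.2)).map
        fun t => mulF K comp (mulF K comp (f t.1) (g t.2.1)) (h t.2.2)).sum := by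
    rw [Multiset.map_bind, Multiset.sum_bind]
    unfold convF
    congr 1
    apply Multiset.map_congr rfl
    intro p _
    rw [mulF_sum_left, Multiset.map_map, Multiset.map_map]
    rfl
  have hR : convF K comp d f (convF K comp d g h) Γ =
      (((d Γ).bind fun p => (d p.2).map fun q => (p.1, q.1, q.2)).map
        fun t => mulF K comp (mulF K comp (f t.1) (g t.2.1)) (h t.2.2)).sum := by
    rw [Multiset.map_bind, Multiset.sum_bind]
    unfold convF
    congr 1
    apply Multiset.map_congr rfl
    intro p _
    rw [mulF_sum_right, Multiset.map_map, Multiset.map_map]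
    congr 1
    apply Multiset.map_congr rfl
    intro q _
    simp only [Function.comp]
    rw [hmulassoc]
  rw [hL, hR, hD2]

/-- the unit-counit convolution identity element -/
noncomputable def uE : C → (C →₀ K) := fun Γ => if Γ = e then Finsupp.single e 1 else 0

lemma conv_uE_left
    (hC3l : ∀ Γ : C, comp e Γ = {Γ})
    (hD3a : d e = {(e, e)})
    (hD3b : ∀ Γ : C, Γ ≠ e → (d Γ).count (e, Γ) = 1)
    (hD3d : ∀ Γ : C, Γ ≠ e → ∀ p ∈ d Γ,
      (p.1 = e → p = (e, Γ)) ∧ (p.2 = e → p = (Γ, e)))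
    (f : C → (C →₀ K)) :
    convF K comp d (uE K e) f = f := by
  funext Γ
  unfold convF
  by_cases he : Γ = e
  · rw [he, hD3a]
    simp only [Multiset.map_singleton, Multiset.sum_singleton]
    have h1 : uE K e (e, e).1 = Finsupp.single e 1 := by simp [uE]
    rw [h1]
    exact mulF_e_left K comp e hC3l (f (e, e).2)
  · have hmem : (e, Γ) ∈ d Γ := by
      rw [← Multiset.count_pos, hD3b Γ he]; norm_num
    have hcons : d Γ = (e, Γ) ::ₘ (d Γ).erase (e, Γ) := (Multiset.cons_erase hmem).symm
    rw [hcons, Multiset.map_cons, Multiset.sum_cons]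
    have h0 : (((d Γ).erase (e, Γ)).map fun p => mulF K comp (uE K e p.1) (f p.2)).sum = 0 := by
      apply Multiset.sum_eq_zero
      intro x hx
      rw [Multiset.mem_map] at hx
      obtain ⟨p, hp, rfl⟩ := hx
      have hpd : p ∈ d Γ := Multiset.mem_of_mem_erase hp
      have hne : p ≠ (e, Γ) := by
        intro h; subst h
        have := Multiset.count_erase_self (e, Γ) (d Γ)
        rw [hD3b Γ he] at this
        simp only [Nat.sub_self] at this
        exact Multiset.count_eq_zero.mp this (by simpa using hp)
      have h1 : p.1 ≠ e := fun h => hne ((hD3d Γ he p hpd).1 h)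
      simp [uE, if_neg h1]
    rw [h0, add_zero]
    have h1 : uE K e (e, Γ).1 = Finsupp.single e 1 := by simp [uE]
    rw [h1]
    exact mulF_e_left K comp e hC3l (f (e, Γ).2)

lemma conv_uE_right
    (hC3r : ∀ Γ : C, comp Γ e = {Γ})
    (hD3a : d e = {(e, e)})
    (hD3c : ∀ Γ : C, Γ ≠ e → (d Γ).count (Γ, e) = 1)
    (hD3d : ∀ Γ : C, Γ ≠ e → ∀ p ∈ d Γ,
      (p.1 = e → p = (e, Γ)) ∧ (p.2 = e → p = (Γ, e)))
    (f : C → (C →₀ K)) :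
    convF K comp d f (uE K e) = f := by
  funext Γ
  unfold convF
  by_cases he : Γ = e
  · rw [he, hD3a]
    simp only [Multiset.map_singleton, Multiset.sum_singleton]
    have h1 : uE K e (e, e).2 = Finsupp.single e 1 := by simp [uE]
    rw [h1]
    exact mulF_e_right K comp e hC3r (f (e, e).1)
  · have hmem : (Γ, e) ∈ d Γ := by
      rw [← Multiset.count_pos, hD3c Γ he]; norm_num
    have hcons : d Γ = (Γ, e) ::ₘ (d Γ).erase (Γ, e) := (Multiset.cons_erase hmem).symm
    rw [hcons, Multiset.map_cons, Multiset.sum_cons]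
    have h0 : (((d Γ).erase (Γ, e)).map fun p => mulF K comp (f p.1) (uE K e p.2)).sum = 0 := by
      apply Multiset.sum_eq_zero
      intro x hx
      rw [Multiset.mem_map] at hx
      obtain ⟨p, hp, rfl⟩ := hx
      have hpd : p ∈ d Γ := Multiset.mem_of_mem_erase hp
      have hne : p ≠ (Γ, e) := by
        intro h; subst h
        have := Multiset.count_erase_self (Γ, e) (d Γ)
        rw [hD3c Γ he] at this
        simp only [Nat.sub_self] at this
        exact Multiset.count_eq_zero.mp this (by simpa using hp)
      have h2 : p.2 ≠ e := fun h => hne ((hD3d Γ he p hpd).2 h)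
      simp [uE, if_neg h2]
    rw [h0, add_zero]
    have h1 : uE K e (Γ, e).2 = Finsupp.single e 1 := by simp [uE]
    rw [h1]
    exact mulF_e_right K comp e hC3r (f (Γ, e).1)

lemma left_inv_SA
    (hC3r : ∀ Γ : C, comp Γ e = {Γ})
    (hC3l : ∀ Γ : C, comp e Γ = {Γ})
    (hD3a : d e = {(e, e)})
    (hD3c : ∀ Γ : C, Γ ≠ e → (d Γ).count (Γ, e) = 1)
    (hD3d : ∀ Γ : C, Γ ≠ e → ∀ p ∈ d Γ,
      (p.1 = e → p = (e, Γ)) ∧ (p.2 = e → p = (Γ, e)))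
    (hszd : ∀ Γ : C, ∀ p ∈ d Γ, sz p.1 + sz p.2 = sz Γ)
    (hze : ∀ Γ : C, sz Γ = 0 ↔ Γ = e) :
    convF K comp d (fun Γ => SA K comp e d (sz Γ) Γ) (fun Γ => Finsupp.single Γ 1)
      = uE K e := by
  funext Γ
  unfold convF
  by_cases he : Γ = e
  · rw [he, hD3a]
    simp only [Multiset.map_singleton, Multiset.sum_singleton]
    have hsz : sz ((e, e) : C × C).1 = 0 := (hze e).mpr rfl
    rw [hsz]
    have h1 : SA K comp e d 0 ((e, e) : C × C).1 = Finsupp.single e 1 := by simp [SA]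
    rw [h1, mulF_e_right K comp e hC3r]
    simp [uE]
  · have hmem : (Γ, e) ∈ d Γ := by
      rw [← Multiset.count_pos, hD3c Γ he]; norm_num
    have hcons : d Γ = (Γ, e) ::ₘ (d Γ).erase (Γ, e) := (Multiset.cons_erase hmem).symm
    rw [hcons, Multiset.map_cons, Multiset.sum_cons]
    have hszΓ : sz Γ ≠ 0 := fun h => he ((hze Γ).mp h)
    obtain ⟨n, hn⟩ : ∃ n, sz Γ = n + 1 := ⟨sz Γ - 1, by omega⟩
    have hSA : SA K comp e d (sz Γ) Γ =
        -(((d Γ).erase (Γ, e)).map fun p =>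
          mulF K comp (SA K comp e d n p.1) (Finsupp.single p.2 1)).sum := by
      rw [hn]; simp only [SA, if_neg he]
    have hmapeq : (((d Γ).erase (Γ, e)).map fun p =>
          mulF K comp (SA K comp e d n p.1) (Finsupp.single p.2 1)) =
        (((d Γ).erase (Γ, e)).map fun p =>
          mulF K comp (SA K comp e d (sz p.1) p.1) (Finsupp.single p.2 1)) := by
      apply Multiset.map_congr rfl
      intro p hp
      obtain ⟨hpd, h2, hlt⟩ := erase_mem_facts e d sz hD3c hD3d hszd hze he hp
      rw [SA_stable K comp e d sz hD3c hD3d hszd hze (sz p.1) p.1 rfl n (sz p.1)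
        (by omega) le_rfl]
    show mulF K comp (SA K comp e d (sz Γ) Γ) (Finsupp.single e 1) +
      (((d Γ).erase (Γ, e)).map fun p =>
        mulF K comp (SA K comp e d (sz p.1) p.1) (Finsupp.single p.2 1)).sum = uE K e Γ
    rw [mulF_e_right K comp e hC3r, hSA, hmapeq]
    simp [uE, he]

lemma right_inv_TA
    (hC3r : ∀ Γ : C, comp Γ e = {Γ})
    (hC3l : ∀ Γ : C, comp e Γ = {Γ})
    (hD3a : d e = {(e, e)})
    (hD3b : ∀ Γ : C, Γ ≠ e → (d Γ).count (e, Γ) = 1)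
    (hD3d : ∀ Γ : C, Γ ≠ e → ∀ p ∈ d Γ,
      (p.1 = e → p = (e, Γ)) ∧ (p.2 = e → p = (Γ, e)))
    (hszd : ∀ Γ : C, ∀ p ∈ d Γ, sz p.1 + sz p.2 = sz Γ)
    (hze : ∀ Γ : C, sz Γ = 0 ↔ Γ = e) :
    convF K comp d (fun Γ => Finsupp.single Γ 1) (fun Γ => TA K comp e d (sz Γ) Γ)
      = uE K e := by
  funext Γ
  unfold convF
  by_cases he : Γ = e
  · rw [he, hD3a]
    simp only [Multiset.map_singleton, Multiset.sum_singleton]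
    have hsz : sz ((e, e) : C × C).2 = 0 := (hze e).mpr rfl
    rw [hsz]
    have h1 : TA K comp e d 0 ((e, e) : C × C).2 = Finsupp.single e 1 := by simp [TA]
    rw [h1, mulF_e_left K comp e hC3l]
    simp [uE]
  · have hmem : (e, Γ) ∈ d Γ := by
      rw [← Multiset.count_pos, hD3b Γ he]; norm_num
    have hcons : d Γ = (e, Γ) ::ₘ (d Γ).erase (e, Γ) := (Multiset.cons_erase hmem).symm
    rw [hcons, Multiset.map_cons, Multiset.sum_cons]
    have hszΓ : sz Γ ≠ 0 := fun h => he ((hze Γ).mp h)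
    obtain ⟨n, hn⟩ : ∃ n, sz Γ = n + 1 := ⟨sz Γ - 1, by omega⟩
    have hTA : TA K comp e d (sz Γ) Γ =
        -(((d Γ).erase (e, Γ)).map fun p =>
          mulF K comp (Finsupp.single p.1 1) (TA K comp e d n p.2)).sum := by
      rw [hn]; simp only [TA, if_neg he]
    have hmapeq : (((d Γ).erase (e, Γ)).map fun p =>
          mulF K comp (Finsupp.single p.1 1) (TA K comp e d n p.2)) =
        (((d Γ).erase (e, Γ)).map fun p =>
          mulF K comp (Finsupp.single p.1 1) (TA K comp e d (sz p.2) p.2)) := by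
      apply Multiset.map_congr rfl
      intro p hp
      obtain ⟨hpd, h1, hlt⟩ := erase_mem_facts' e d sz hD3b hD3d hszd hze he hp
      rw [TA_stable K comp e d sz hD3b hD3d hszd hze (sz p.2) p.2 rfl n (sz p.2)
        (by omega) le_rfl]
    show mulF K comp (Finsupp.single e 1) (TA K comp e d (sz Γ) Γ) +
      (((d Γ).erase (e, Γ)).map fun p =>
        mulF K comp (Finsupp.single p.1 1) (TA K comp e d (sz p.2) p.2)).sum = uE K e Γ
    rw [mulF_e_left K comp e hC3l, hTA, hmapeq]
    simp [uE, he]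

lemma sum_single_apply_zero (Γ : C) (s : Multiset C) (h : ∀ x ∈ s, x ≠ Γ) :
    ((s.map fun x => Finsupp.single x (1:K)).sum) Γ = 0 := by
  induction s using Multiset.induction_on with
  | empty => simp
  | cons a s ih =>
    rw [Multiset.map_cons, Multiset.sum_cons, Finsupp.add_apply]
    rw [ih (fun x hx => h x (Multiset.mem_cons_of_mem hx)), add_zero]
    exact Finsupp.single_eq_of_ne' (h a (Multiset.mem_cons_self a s))

end

/-- Proposition 4 (Grading): under (C2), (C3), (D2), (D3), (CD1) and the
size-compatibility condition (CD2), the Hopf algebra structure exists (there is an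
antipode) and is graded by size: the product of basis elements of sizes `i` and `j`
is supported in size `i + j`, and decompositions split the size. -/
theorem stmt11 {C : Type*} (K : Type*) [CommRing K] [DecidableEq C]
    (comp : C → C → Multiset C)
    (hC2 : ∀ Γ₃ Γ₂ Γ₁ : C,
      (comp Γ₂ Γ₁).bind (fun x => comp Γ₃ x) = (comp Γ₃ Γ₂).bind (fun x => comp x Γ₁))
    (e : C)
    (hC3l : ∀ Γ : C, comp e Γ = {Γ})
    (hC3r : ∀ Γ : C, comp Γ e = {Γ})
    (d : C → Multiset (C × C))
    (hD2 : ∀ Γ : C,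
      (d Γ).bind (fun p => (d p.2).map (fun q => (p.1, q.1, q.2))) =
      (d Γ).bind (fun p => (d p.1).map (fun q => (q.1, q.2, p.2))))
    (hD3a : d e = {(e, e)})
    (hD3b : ∀ Γ : C, Γ ≠ e → (d Γ).count (e, Γ) = 1)
    (hD3c : ∀ Γ : C, Γ ≠ e → (d Γ).count (Γ, e) = 1)
    (hD3d : ∀ Γ : C, Γ ≠ e → ∀ p ∈ d Γ,
      (p.1 = e → p = (e, Γ)) ∧ (p.2 = e → p = (Γ, e)))
    (hCD1 : ∀ Γ₂ Γ₁ : C,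
      (comp Γ₂ Γ₁).bind d =
        (d Γ₂).bind (fun p₂ => (d Γ₁).bind (fun p₁ =>
          (comp p₂.1 p₁.1).bind (fun a =>
            (comp p₂.2 p₁.2).map (fun b => (a, b))))))
    (sz : C → ℕ)
    (hszc : ∀ Γ₂ Γ₁ : C, ∀ Γ ∈ comp Γ₂ Γ₁, sz Γ = sz Γ₂ + sz Γ₁)
    (hszd : ∀ Γ : C, ∀ p ∈ d Γ, sz p.1 + sz p.2 = sz Γ)
    (hze : ∀ Γ : C, sz Γ = 0 ↔ Γ = e) :
    (∃ S : (C →₀ K) →ₗ[K] (C →₀ K),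
      ∀ Γ : C,
        ((d Γ).map fun p =>
            mulF K comp (S (Finsupp.single p.1 1)) (Finsupp.single p.2 1)).sum =
          (if Γ = e then Finsupp.single e (1 : K) else 0) ∧
        ((d Γ).map fun p =>
            mulF K comp (Finsupp.single p.1 1) (S (Finsupp.single p.2 1))).sum =
          (if Γ = e then Finsupp.single e (1 : K) else 0)) ∧
    (∀ Γ₂ Γ₁ Γ : C,
      Γ ∈ (mulF K comp (Finsupp.single Γ₂ 1) (Finsupp.single Γ₁ 1)).support →
        sz Γ = sz Γ₂ + sz Γ₁) ∧
    (∀ Γ : C, ∀ p ∈ d Γ, sz p.1 + sz p.2 = sz Γ) := by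
  refine ⟨?_, ?_, hszd⟩
  · -- antipode
    set S0 : C → (C →₀ K) := fun Γ => SA K comp e d (sz Γ) Γ with hS0def
    set T0 : C → (C →₀ K) := fun Γ => TA K comp e d (sz Γ) Γ with hT0def
    have hmulassoc := mulF_assoc K comp hC2
    have idB : (C → (C →₀ K)) := fun Γ => Finsupp.single Γ 1
    have h1 : convF K comp d S0 (fun Γ => Finsupp.single Γ 1) = uE K e :=
      left_inv_SA K comp e d sz hC3r hC3l hD3a hD3c hD3d hszd hze
    have h2 : convF K comp d (fun Γ => Finsupp.single Γ 1) T0 = uE K e :=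
      right_inv_TA K comp e d sz hC3r hC3l hD3a hD3b hD3d hszd hze
    have hST : S0 = T0 := by
      calc S0 = convF K comp d S0 (uE K e) :=
            (conv_uE_right K comp e d hC3r hD3a hD3c hD3d S0).symm
        _ = convF K comp d S0 (convF K comp d (fun Γ => Finsupp.single Γ 1) T0) := by
            rw [h2]
        _ = convF K comp d (convF K comp d S0 (fun Γ => Finsupp.single Γ 1)) T0 :=
            (conv_assoc K comp d hmulassoc hD2 _ _ _).symm
        _ = convF K comp d (uE K e) T0 := by rw [h1]
        _ = T0 := conv_uE_left K comp e d hC3l hD3a hD3b hD3d T0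
    refine ⟨Finsupp.lift (C →₀ K) K C S0, ?_⟩
    intro Γ
    have hS : ∀ a : C, (Finsupp.lift (C →₀ K) K C S0) (Finsupp.single a 1) = S0 a := by
      intro a
      simp [Finsupp.lift_apply, Finsupp.sum_single_index]
    constructor
    · have hh := congrFun h1 Γ
      unfold convF at hh
      calc ((d Γ).map fun p => mulF K comp
              ((Finsupp.lift (C →₀ K) K C S0) (Finsupp.single p.1 1))
              (Finsupp.single p.2 1)).sum
          = ((d Γ).map fun p =>
              mulF K comp (S0 p.1) (Finsupp.single p.2 1)).sum := by
            congr 1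
            exact Multiset.map_congr rfl fun p _ => by rw [hS]
        _ = uE K e Γ := hh
        _ = if Γ = e then Finsupp.single e (1 : K) else 0 := rfl
    · have hh := congrFun h2 Γ
      unfold convF at hh
      calc ((d Γ).map fun p => mulF K comp (Finsupp.single p.1 1)
              ((Finsupp.lift (C →₀ K) K C S0) (Finsupp.single p.2 1))).sum
          = ((d Γ).map fun p =>
              mulF K comp (Finsupp.single p.1 1) (T0 p.2)).sum := by
            congr 1
            exact Multiset.map_congr rfl fun p _ => by rw [hS, hST]
        _ = uE K e Γ := hh
        _ = if Γ = e then Finsupp.single e (1 : K) else 0 := rfl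
  · -- grading of the product
    intro Γ₂ Γ₁ Γ hmem
    by_contra hne
    rw [mulF_single] at hmem
    have h0 : ((comp Γ₂ Γ₁).map fun x => Finsupp.single x (1:K)).sum Γ = 0 := by
      apply sum_single_apply_zero
      intro x hx hxe
      exact hne (hxe ▸ hszc Γ₂ Γ₁ x hx)
    exact Finsupp.mem_support_iff.mp hmem h0
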